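/- For any θ ∈ (-∞,0) ∪ (0,1), the function f(y) = (θ/σ)φ((y-μ)/σ) / [(θΦ((y-μ)/σ) - 1)·log(1-θ)] is a probability density function on ℝ. -/

import Mathlib

open MeasureTheory Filter Topology

noncomputable def stdPdf (x : ℝ) : ℝ := (Real.sqrt (2 * Real.pi))⁻¹ * Real.exp (-(x ^ 2) / 2)

noncomputable def stdCdf (x : ℝ) : ℝ := ∫ t in Set.Iic x, stdPdf t

lemma stdPdf_pos (x : ℝ) : 0 < stdPdf x := by
  unfold stdPdf
  positivity

lemma continuous_stdPdf : Continuous stdPdf := by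
  unfold stdPdf
  fun_prop

lemma integrable_stdPdf : Integrable stdPdf := by
  have : Integrable (fun x : ℝ => Real.exp (-(1/2) * x ^ 2)) := integrable_exp_neg_mul_sq (by norm_num)
  unfold stdPdf
  simpa [neg_div, neg_mul, mul_comm, div_eq_inv_mul] using this.const_mul (Real.sqrt (2 * Real.pi))⁻¹

lemma integral_stdPdf : ∫ x, stdPdf x = 1 := by
  have h := integral_gaussian (1/2)
  have h2 : ∫ x : ℝ, Real.exp (-(x^2)/2) = Real.sqrt (2 * Real.pi) := by
    rw [show (fun x : ℝ => Real.exp (-(x^2)/2)) = fun x : ℝ => Real.exp (-(1/2) * x^2) by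
      funext x; ring_nf]
    rw [h]; norm_num; ring
  unfold stdPdf
  rw [integral_const_mul, h2, inv_mul_cancel₀]
  positivity

lemma stdCdf_nonneg (x : ℝ) : 0 ≤ stdCdf x :=
  setIntegral_nonneg measurableSet_Iic (fun t _ => (stdPdf_pos t).le)

lemma stdCdf_le_one (x : ℝ) : stdCdf x ≤ 1 := by
  rw [← integral_stdPdf]
  exact setIntegral_le_integral integrable_stdPdf (Filter.Eventually.of_forall fun t => (stdPdf_pos t).le)

lemma hasDerivAt_stdCdf (x : ℝ) : HasDerivAt stdCdf (stdPdf x) x := by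
  have key : ∀ y : ℝ, stdCdf y = stdCdf 0 + ∫ t in (0:ℝ)..y, stdPdf t := by
    intro y
    have := intervalIntegral.integral_Iic_sub_Iic (f := stdPdf) (μ := volume) (a := 0) (b := y)
      integrable_stdPdf.integrableOn integrable_stdPdf.integrableOn
    unfold stdCdf; unfold stdCdf at this; linarith
  have h : HasDerivAt (fun y => stdCdf 0 + ∫ t in (0:ℝ)..y, stdPdf t) (stdPdf x) x := by
    apply HasDerivAt.const_add
    exact intervalIntegral.integral_hasDerivAt_right
      integrable_stdPdf.intervalIntegrable
      (integrable_stdPdf.aestronglyMeasurable.stronglyMeasurableAtFilter)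
      continuous_stdPdf.continuousAt
  exact h.congr_of_eventuallyEq (Filter.Eventually.of_forall key)

lemma continuous_stdCdf : Continuous stdCdf :=
  continuous_iff_continuousAt.2 fun x => (hasDerivAt_stdCdf x).continuousAt

lemma tendsto_stdCdf_atTop : Tendsto stdCdf atTop (𝓝 1) := by
  rw [← integral_stdPdf]
  exact (MeasureTheory.aecover_Iic (tendsto_id (α := ℝ))).integral_tendsto_of_countably_generated
    integrable_stdPdf

lemma tendsto_stdCdf_atBot : Tendsto stdCdf atBot (𝓝 0) := by
  have h1 : Tendsto (fun x : ℝ => ∫ t in Set.Ioi x, stdPdf t) atBot (𝓝 1) := by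
    rw [← integral_stdPdf]
    exact (MeasureTheory.aecover_Ioi (tendsto_id (α := ℝ))).integral_tendsto_of_countably_generated
      integrable_stdPdf
  have h2 : ∀ x : ℝ, stdCdf x = 1 - ∫ t in Set.Ioi x, stdPdf t := by
    intro x
    have := integral_add_compl (measurableSet_Iic (a := x)) integrable_stdPdf
    rw [Set.compl_Iic, integral_stdPdf] at this
    unfold stdCdf; linarith
  have := (tendsto_const_nhds (x := (1:ℝ)) (f := atBot (α := ℝ))).sub h1
  rw [sub_self] at this
  exact this.congr (fun x => (h2 x).symm)

/-- for θ ∈ (-∞,0) ∪ (0,1) the normal-logarithmic density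
`f(y) = (θ/σ)φ(z)/[(θΦ(z)-1)log(1-θ)]` is a probability density on ℝ. -/
theorem nl_is_density (μ σ θ : ℝ) (hσ : 0 < σ) (hθ : θ < 1) (hθ0 : θ ≠ 0) :
    (∀ y : ℝ, 0 ≤ θ / σ * stdPdf ((y - μ) / σ)
        / ((θ * stdCdf ((y - μ) / σ) - 1) * Real.log (1 - θ))) ∧
    ∫ y : ℝ, θ / σ * stdPdf ((y - μ) / σ)
        / ((θ * stdCdf ((y - μ) / σ) - 1) * Real.log (1 - θ)) = 1 := by
  set L := Real.log (1 - θ) with hL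
  set f : ℝ → ℝ := fun y => θ / σ * stdPdf ((y - μ) / σ)
      / ((θ * stdCdf ((y - μ) / σ) - 1) * L) with hf
  have h1θ : (0:ℝ) < 1 - θ := by linarith
  -- denominator factor sign
  have hDneg : ∀ y : ℝ, θ * stdCdf ((y - μ) / σ) - 1 < 0 := by
    intro y
    rcases le_or_gt θ 0 with h | h
    · nlinarith [stdCdf_nonneg ((y - μ) / σ)]
    · nlinarith [stdCdf_le_one ((y - μ) / σ)]
  have hm : ∀ y : ℝ, min 1 (1 - θ) ≤ 1 - θ * stdCdf ((y - μ) / σ) := by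
    intro y
    rcases le_or_gt θ 0 with h | h
    · have := stdCdf_nonneg ((y - μ) / σ)
      have : θ * stdCdf ((y - μ) / σ) ≤ 0 := mul_nonpos_of_nonpos_of_nonneg h this
      calc min 1 (1 - θ) ≤ 1 := min_le_left _ _
        _ ≤ 1 - θ * stdCdf ((y - μ) / σ) := by linarith
    · have := stdCdf_le_one ((y - μ) / σ)
      have : θ * stdCdf ((y - μ) / σ) ≤ θ := by nlinarith
      calc min 1 (1 - θ) ≤ 1 - θ := min_le_right _ _
        _ ≤ 1 - θ * stdCdf ((y - μ) / σ) := by linarith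
  have hmpos : (0:ℝ) < min 1 (1 - θ) := lt_min one_pos h1θ
  have hLsign : (0 < θ → L < 0) ∧ (θ < 0 → 0 < L) := by
    constructor
    · intro h; exact Real.log_neg (by linarith) (by linarith)
    · intro h; exact Real.log_pos (by linarith)
  have hLne : L ≠ 0 := by
    rcases lt_or_gt_of_ne hθ0 with h | h
    · exact (hLsign.2 h).ne'
    · exact (hLsign.1 h).ne
  -- nonnegativity
  have hnonneg : ∀ y : ℝ, 0 ≤ f y := by
    intro y
    rcases lt_or_gt_of_ne hθ0 with h | h
    · apply div_nonneg_of_nonpos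
      · exact mul_nonpos_of_nonpos_of_nonneg (div_nonpos_of_nonpos_of_nonneg h.le hσ.le)
          (stdPdf_pos _).le
      · exact mul_nonpos_of_nonpos_of_nonneg (hDneg y).le (hLsign.2 h).le
    · apply div_nonneg
      · exact mul_nonneg (div_nonneg h.le hσ.le) (stdPdf_pos _).le
      · exact (mul_pos_of_neg_of_neg (hDneg y) (hLsign.1 h)).le
  refine ⟨hnonneg, ?_⟩
  -- the antiderivative
  set g : ℝ → ℝ := fun y => Real.log (1 - θ * stdCdf ((y - μ) / σ)) / L with hg
  have hderiv : ∀ y : ℝ, HasDerivAt g (f y) y := by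
    intro y
    have h1 : HasDerivAt (fun y : ℝ => (y - μ) / σ) (1 / σ) y := by
      simpa using ((hasDerivAt_id y).sub_const μ).div_const σ
    have h2 : HasDerivAt (fun y : ℝ => stdCdf ((y - μ) / σ)) (stdPdf ((y - μ) / σ) * (1 / σ)) y :=
      by have := (hasDerivAt_stdCdf ((y - μ) / σ)).comp y h1; exact this
    have h3 : HasDerivAt (fun y : ℝ => 1 - θ * stdCdf ((y - μ) / σ))
        (-(θ * (stdPdf ((y - μ) / σ) * (1 / σ)))) y := (h2.const_mul θ).const_sub 1
    have hne : 1 - θ * stdCdf ((y - μ) / σ) ≠ 0 := by have := hDneg y; intro h; linarith [h]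
    have h4 := (h3.log hne).div_const L
    refine h4.congr_deriv ?_
    rw [hf]
    have hDne : θ * stdCdf ((y - μ) / σ) - 1 ≠ 0 := (hDneg y).ne
    field_simp
    ring
  -- integrability of f
  have hbase : Integrable (fun y : ℝ => stdPdf ((y - μ) / σ)) := by
    have h1 : Integrable (fun x : ℝ => stdPdf (x / σ)) := integrable_stdPdf.comp_div hσ.ne'
    exact h1.comp_sub_right μ
  have hcontf : Continuous f := by
    rw [hf]
    apply Continuous.div
    · exact (continuous_const.mul (continuous_stdPdf.comp (by fun_prop)))
    · apply Continuous.mul _ continuous_const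
      apply Continuous.sub _ continuous_const
      exact (continuous_const.mul (continuous_stdCdf.comp (by fun_prop)))
    · intro y
      exact mul_ne_zero (hDneg y).ne hLne
  set K : ℝ := |θ| / σ / (min 1 (1 - θ) * |L|) with hK
  have hint : Integrable f := by
    apply (hbase.const_mul K).mono' hcontf.aestronglyMeasurable
    apply Filter.Eventually.of_forall
    intro y
    have hp := stdPdf_pos ((y - μ) / σ)
    have hD := hDneg y
    have h1 : ‖f y‖ = |θ| / σ * stdPdf ((y - μ) / σ)
        / ((1 - θ * stdCdf ((y - μ) / σ)) * |L|) := by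
      rw [hf, Real.norm_eq_abs, abs_div, abs_mul, abs_mul, abs_div,
        abs_of_pos hp, abs_of_pos hσ, abs_of_neg hD]
      ring_nf
    rw [h1]
    calc |θ| / σ * stdPdf ((y - μ) / σ) / ((1 - θ * stdCdf ((y - μ) / σ)) * |L|)
        ≤ |θ| / σ * stdPdf ((y - μ) / σ) / (min 1 (1 - θ) * |L|) := by
          apply div_le_div_of_nonneg_left
          · positivity
          · positivity
          · exact mul_le_mul_of_nonneg_right (hm y) (abs_nonneg L)
      _ = K * stdPdf ((y - μ) / σ) := by rw [hK]; ring
  -- limits of g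
  have hztop : Tendsto (fun y : ℝ => (y - μ) / σ) atTop atTop := by
    apply Tendsto.atTop_div_const hσ
    simpa [sub_eq_add_neg] using tendsto_atTop_add_const_right atTop (-μ) tendsto_id
  have hzbot : Tendsto (fun y : ℝ => (y - μ) / σ) atBot atBot := by
    apply Tendsto.atBot_div_const hσ
    simpa [sub_eq_add_neg] using tendsto_atBot_add_const_right atBot (-μ) tendsto_id
  have hgtop : Tendsto g atTop (𝓝 1) := by
    have hc : Tendsto (fun y : ℝ => 1 - θ * stdCdf ((y - μ) / σ)) atTop (𝓝 (1 - θ)) := by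
      have := (tendsto_stdCdf_atTop.comp hztop).const_mul θ
      simpa using tendsto_const_nhds.sub this
    have := ((Real.continuousAt_log h1θ.ne').tendsto.comp hc).div_const L
    rw [← hL, div_self hLne] at this
    exact this
  have hgbot : Tendsto g atBot (𝓝 0) := by
    have hc : Tendsto (fun y : ℝ => 1 - θ * stdCdf ((y - μ) / σ)) atBot (𝓝 1) := by
      have := (tendsto_stdCdf_atBot.comp hzbot).const_mul θ
      simpa using tendsto_const_nhds.sub this
    have := ((Real.continuousAt_log one_ne_zero).tendsto.comp hc).div_const L
    simpa using this
  -- assemble via FTC on Iic 0 and Ioi 0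
  have hIic : ∫ y in Set.Iic (0:ℝ), f y = g 0 - 0 :=
    integral_Iic_of_hasDerivAt_of_tendsto' (fun x _ => hderiv x) hint.integrableOn hgbot
  have hIoi : ∫ y in Set.Ioi (0:ℝ), f y = 1 - g 0 :=
    integral_Ioi_of_hasDerivAt_of_tendsto' (fun x _ => hderiv x) hint.integrableOn hgtop
  have := integral_add_compl (measurableSet_Iic (a := (0:ℝ))) hint
  rw [Set.compl_Iic] at this
  calc ∫ y, f y = (∫ y in Set.Iic (0:ℝ), f y) + ∫ y in Set.Ioi (0:ℝ), f y := this.symm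
    _ = (g 0 - 0) + (1 - g 0) := by rw [hIic, hIoi]
    _ = 1 := by ring
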